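/- If all Fourier blocks Σ_1,…,Σ_p of a real tensor S are equal real diagonal matrices with nonnegative entries satisfying Σ_{p−k+2} = Σ_k, then the tensor X defined by the Fourier blocks Σ_1†,…,Σ_p† (matrix Moore–Penrose inverses) is real-valued and is the Moore–Penrose inverse of S with respect to the t-product. -/
import Mathlib


open Matrix Complex BigOperators Kronecker

/-- A third-order tensor, represented by its frontal slices (indexed cyclically). -/
abbrev Tensor (F : Type*) (m n p : ℕ) : Type _ :=
  ZMod p → Matrix (Fin m) (Fin n) F

/-- The block-circulant matrix of a tensor: block (i,j) is slice (i - j mod p). -/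
def bcirc {F : Type*} {m n p : ℕ} (A : Tensor F m n p) :
    Matrix (ZMod p × Fin m) (ZMod p × Fin n) F :=
  Matrix.of fun ir jc => A (ir.1 - jc.1) ir.2 jc.2

/-- The t-product of tensors: (A*B)^{(i)} = ∑_j A^{(i-j)} B^{(j)}. -/
def tpr {F : Type*} [CommRing F] {m n l p : ℕ} [NeZero p]
    (A : Tensor F m n p) (B : Tensor F n l p) : Tensor F m l p :=
  fun i => ∑ j : ZMod p, A (i - j) * B j

/-- The identity tensor: first frontal slice is I_n, others are zero. -/
def tId (F : Type*) [CommRing F] (n p : ℕ) [NeZero p] : Tensor F n n p :=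
  fun i => if i = 0 then 1 else 0

/-- Tensor transpose: transpose each slice and reverse the order of slices 2..p. -/
def tT {F : Type*} {m n p : ℕ} (A : Tensor F m n p) : Tensor F n m p :=
  fun i => (A (-i))ᵀ

/-- ξ = e^{-2πi/p}. -/
noncomputable def xi (p : ℕ) : ℂ :=
  Complex.exp (-(2 * Real.pi * Complex.I) / p)

/-- The normalized DFT matrix of order p. -/
noncomputable def Fmat (p : ℕ) : Matrix (ZMod p) (ZMod p) ℂ :=
  Matrix.of fun j k => (1 / (Real.sqrt p : ℂ)) * xi p ^ (j.val * k.val)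

/-- The Fourier blocks of a complex tensor: A_i = ∑_k ξ^{(i)(k)} A^{(k)} (0-based). -/
noncomputable def fblock {m n p : ℕ} [NeZero p] (A : Tensor ℂ m n p) (i : ZMod p) :
    Matrix (Fin m) (Fin n) ℂ :=
  ∑ k : ZMod p, xi p ^ (i.val * k.val) • A k

/-- Complexification of a real tensor. -/
def cplx {m n p : ℕ} (A : Tensor ℝ m n p) : Tensor ℂ m n p :=
  fun i => (A i).map (Complex.ofReal)

/-- Block diagonal matrix with p equal-size blocks. -/
def blockDiag {m n p : ℕ} (M : ZMod p → Matrix (Fin m) (Fin n) ℂ) :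
    Matrix (ZMod p × Fin m) (ZMod p × Fin n) ℂ :=
  Matrix.of fun ir jc => if ir.1 = jc.1 then M ir.1 ir.2 jc.2 else 0

/-- Entrywise conjugation of a complex matrix. -/
def conjM {m n : ℕ} (M : Matrix (Fin m) (Fin n) ℂ) : Matrix (Fin m) (Fin n) ℂ :=
  M.map (starRingEnd ℂ)

/-- A complex matrix is real if all entries have zero imaginary part. -/
def IsRealM {m n : ℕ} (M : Matrix (Fin m) (Fin n) ℂ) : Prop :=
  ∀ r c, (M r c).im = 0

/-- Moore–Penrose inverse of a (rectangular) diagonal matrix: transpose and invert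
the nonzero diagonal entries. -/
noncomputable def pinvDiag {m n : ℕ} (Sg : Matrix (Fin m) (Fin n) ℂ) :
    Matrix (Fin n) (Fin m) ℂ :=
  Matrix.of fun r c => if (r : ℕ) = (c : ℕ) then (Sg c r)⁻¹ else 0

set_option linter.unusedSectionVars false
set_option linter.unusedVariables false


section zetalemmas
variable (p : ℕ) [NeZero p]

lemma xi_prim : IsPrimitiveRoot (xi p) p := by
  have h := Complex.isPrimitiveRoot_exp p (NeZero.ne p)
  have : xi p = (Complex.exp (2 * Real.pi * Complex.I / p))⁻¹ := by
    rw [xi, ← Complex.exp_neg]; ring_nf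
  rw [this]
  exact h.inv

lemma xi_pow_p : xi p ^ p = 1 := (xi_prim p).pow_eq_one

noncomputable def zeta (a : ZMod p) : ℂ := xi p ^ a.val

lemma xi_pow_mod (x : ℕ) : xi p ^ (x % p) = xi p ^ x :=
  (pow_eq_pow_mod x (xi_pow_p p)).symm

lemma zeta_add (a b : ZMod p) : zeta p (a + b) = zeta p a * zeta p b := by
  rw [zeta, zeta, zeta, ZMod.val_add, xi_pow_mod, pow_add]

lemma zeta_zero : zeta p 0 = 1 := by
  rw [zeta, ZMod.val_zero, pow_zero]

lemma zeta_mul (a k : ZMod p) : zeta p (a * k) = (zeta p a) ^ k.val := by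
  rw [zeta, zeta, ZMod.val_mul, xi_pow_mod, pow_mul]

lemma zeta_mul_val (a k : ZMod p) : zeta p (a * k) = xi p ^ (a.val * k.val) := by
  rw [zeta, ZMod.val_mul, xi_pow_mod]

lemma xi_ne_zero : xi p ≠ 0 := Complex.exp_ne_zero _

lemma zeta_ne_zero (a : ZMod p) : zeta p a ≠ 0 :=
  pow_ne_zero _ (xi_ne_zero p)

lemma zeta_neg (a : ZMod p) : zeta p (-a) = (zeta p a)⁻¹ := by
  have h : zeta p a * zeta p (-a) = 1 := by
    rw [← zeta_add, add_neg_cancel, zeta_zero]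
  field_simp [zeta_ne_zero] at h ⊢
  linear_combination h

lemma conj_xi : (starRingEnd ℂ) (xi p) = (xi p)⁻¹ := by
  rw [xi, ← Complex.exp_conj, ← Complex.exp_neg]
  congr 1
  simp only [map_div₀, map_neg, _root_.map_mul, Complex.conj_I, Complex.conj_ofReal, map_natCast,
    map_ofNat]
  ring

lemma conj_zeta (a : ZMod p) : (starRingEnd ℂ) (zeta p a) = zeta p (-a) := by
  rw [zeta, map_pow, conj_xi, inv_pow, zeta_neg, zeta]

lemma zeta_pow_p (a : ZMod p) : zeta p a ^ p = 1 := by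
  rw [zeta, ← pow_mul, mul_comm, pow_mul, xi_pow_p, one_pow]

lemma zeta_ne_one (a : ZMod p) (ha : a ≠ 0) : zeta p a ≠ 1 := by
  intro h
  have := (xi_prim p).pow_eq_one_iff_dvd a.val
  rw [zeta] at h
  have hdvd : (p : ℕ) ∣ a.val := (this).mp h
  have hlt : a.val < p := ZMod.val_lt a
  have hne : a.val ≠ 0 := fun h0 => ha ((ZMod.val_eq_zero a).mp h0)
  exact hne (Nat.eq_zero_of_dvd_of_lt hdvd hlt)

lemma sum_val {β : Type*} [AddCommMonoid β] (f : ℕ → β) :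
    ∑ k : ZMod p, f k.val = ∑ j ∈ Finset.range p, f j := by
  apply Finset.sum_nbij' (fun (k : ZMod p) => k.val) (fun (j : ℕ) => (j : ZMod p))
  · intro k _; exact Finset.mem_range.mpr (ZMod.val_lt k)
  · intro j _; exact Finset.mem_univ _
  · intro k _; simp [ZMod.natCast_val, ZMod.cast_id]
  · intro j hj; exact ZMod.val_cast_of_lt (Finset.mem_range.mp hj)
  · intros; rfl

lemma sum_zeta (a : ZMod p) :
    ∑ k : ZMod p, zeta p (a * k) = if a = 0 then (p : ℂ) else 0 := by
  split_ifs with h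
  · subst h; simp [zeta_zero, zero_mul]
  · have h1 : ∀ k : ZMod p, zeta p (a * k) = (zeta p a) ^ k.val := zeta_mul p a
    simp only [h1, sum_val p (fun j => zeta p a ^ j)]
    have := geom_sum_mul (zeta p a) p
    rw [zeta_pow_p, sub_self] at this
    rcases mul_eq_zero.mp this with h2 | h2
    · exact h2
    · exact absurd (sub_eq_zero.mp h2) (zeta_ne_one p a h)

end zetalemmas

section fblocklemmas
variable {m n l p : ℕ} [NeZero p]

lemma fblock_eq (A : Tensor ℂ m n p) (i : ZMod p) :
    fblock A i = ∑ k : ZMod p, zeta p (i * k) • A k := by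
  unfold fblock
  exact Finset.sum_congr rfl fun k _ => by rw [zeta_mul_val]

lemma fblock_tpr (A : Tensor ℂ m n p) (B : Tensor ℂ n l p) (i : ZMod p) :
    fblock (tpr A B) i = fblock A i * fblock B i := by
  rw [fblock_eq, fblock_eq, fblock_eq, Matrix.sum_mul]
  unfold tpr
  simp only [Finset.smul_sum, Matrix.mul_sum]
  conv_lhs => rw [Finset.sum_comm]
  conv_rhs => rw [Finset.sum_comm]
  apply Finset.sum_congr rfl
  intro j _
  rw [← Equiv.sum_comp (Equiv.addRight j) (fun k => zeta p (i * k) • (A (k - j) * B j))]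
  apply Finset.sum_congr rfl
  intro s _
  simp only [Equiv.coe_addRight, add_sub_cancel_right]
  rw [mul_add, zeta_add, Matrix.smul_mul, Matrix.mul_smul, smul_smul]

lemma fblock_tT (A : Tensor ℂ m n p) (i : ZMod p) :
    fblock (tT A) i = (fblock A (-i))ᵀ := by
  rw [fblock_eq, fblock_eq, Matrix.transpose_sum]
  rw [← Equiv.sum_comp (Equiv.neg (ZMod p)) (fun k => zeta p (i * k) • (tT A) k)]
  apply Finset.sum_congr rfl
  intro k _
  simp only [Equiv.neg_apply, tT, neg_neg]
  rw [Matrix.transpose_smul]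
  congr 1
  ring_nf

lemma fblock_of_inv (Q : ZMod p → Matrix (Fin m) (Fin n) ℂ) (i : ZMod p) :
    fblock (fun t => (p : ℂ)⁻¹ • ∑ k : ZMod p, zeta p (-(k * t)) • Q k) i = Q i := by
  rw [fblock_eq]
  have key : ∀ t : ZMod p,
      zeta p (i * t) • ((p : ℂ)⁻¹ • ∑ k : ZMod p, zeta p (-(k * t)) • Q k)
        = ∑ k : ZMod p, ((p : ℂ)⁻¹ * zeta p ((i - k) * t)) • Q k := by
    intro t
    rw [Finset.smul_sum, Finset.smul_sum]
    apply Finset.sum_congr rfl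
    intro k _
    rw [smul_smul, smul_smul, sub_mul, sub_eq_add_neg, zeta_add]
    ring_nf
  simp only [key]
  rw [Finset.sum_comm]
  have key2 : ∀ k : ZMod p,
      (∑ t : ZMod p, ((p : ℂ)⁻¹ * zeta p ((i - k) * t)) • Q k)
        = (if i - k = 0 then (1 : ℂ) else 0) • Q k := by
    intro k
    rw [← Finset.sum_smul, ← Finset.mul_sum, sum_zeta]
    congr 1
    split_ifs with h
    · rw [inv_mul_cancel₀ (Nat.cast_ne_zero.mpr (NeZero.ne p))]
    · rw [mul_zero]
  simp only [key2, sub_eq_zero]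
  rw [Finset.sum_eq_single i]
  · rw [if_pos rfl, one_smul]
  · intro k _ hk; rw [if_neg (fun h => hk h.symm), zero_smul]
  · intro h; exact absurd (Finset.mem_univ i) h

lemma fblock_inv (A : Tensor ℂ m n p) :
    A = fun t => (p : ℂ)⁻¹ • ∑ i : ZMod p, zeta p (-(i * t)) • fblock A i := by
  funext t
  have key : ∀ i : ZMod p, zeta p (-(i * t)) • fblock A i
      = ∑ k : ZMod p, zeta p ((k - t) * i) • A k := by
    intro i
    rw [fblock_eq, Finset.smul_sum]
    apply Finset.sum_congr rfl
    intro k _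
    rw [smul_smul]
    congr 1
    rw [← zeta_add]
    congr 1
    ring
  simp only [key]
  rw [Finset.sum_comm]
  have key2 : ∀ k : ZMod p, (∑ i : ZMod p, zeta p ((k - t) * i) • A k)
      = (if k - t = 0 then (p : ℂ) else 0) • A k := by
    intro k
    rw [← Finset.sum_smul, sum_zeta]
  simp only [key2, sub_eq_zero]
  rw [Finset.sum_eq_single t]
  · rw [if_pos rfl, smul_smul, inv_mul_cancel₀ (Nat.cast_ne_zero.mpr (NeZero.ne p)), one_smul]
  · intro k _ hk; rw [if_neg hk, zero_smul]
  · intro h; exact absurd (Finset.mem_univ t) h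

lemma fblock_inj (A B : Tensor ℂ m n p) (h : ∀ i, fblock A i = fblock B i) : A = B := by
  rw [fblock_inv A, fblock_inv B]
  simp only [h]

end fblocklemmas

section pinvlemmas
variable {m n : ℕ} (D : Matrix (Fin m) (Fin n) ℂ)
  (hd : ∀ (r : Fin m) (c : Fin n), (r : ℕ) ≠ (c : ℕ) → D r c = 0)
include hd

lemma PD_offdiag (a c : Fin n) (h : a ≠ c) : (pinvDiag D * D) a c = 0 := by
  rw [Matrix.mul_apply]
  apply Finset.sum_eq_zero
  intro s _
  by_cases h1 : (a : ℕ) = (s : ℕ)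
  · by_cases h2 : (s : ℕ) = (c : ℕ)
    · exact absurd (Fin.ext (h1.trans h2)) h
    · rw [hd s c h2, mul_zero]
  · rw [pinvDiag]
    simp only [Matrix.of_apply, if_neg h1, zero_mul]

lemma DP_offdiag (s b : Fin m) (h : s ≠ b) : (D * pinvDiag D) s b = 0 := by
  rw [Matrix.mul_apply]
  apply Finset.sum_eq_zero
  intro t _
  by_cases h1 : (t : ℕ) = (b : ℕ)
  · by_cases h2 : (s : ℕ) = (t : ℕ)
    · exact absurd (Fin.ext (h2.trans h1)) h
    · rw [hd s t h2, zero_mul]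
  · rw [pinvDiag]
    simp only [Matrix.of_apply, if_neg h1, mul_zero]

lemma penrose1 : D * (pinvDiag D * D) = D := by
  ext r c
  rw [Matrix.mul_apply, Finset.sum_eq_single c]
  · by_cases hD : D r c = 0
    · rw [hD, zero_mul]
    · have hrc : (r : ℕ) = (c : ℕ) := by
        by_contra h; exact hD (hd r c h)
      have h1 : (pinvDiag D * D) c c = 1 := by
        rw [Matrix.mul_apply, Finset.sum_eq_single r]
        · rw [pinvDiag]
          simp only [Matrix.of_apply, if_pos hrc.symm]
          exact inv_mul_cancel₀ hD
        · intro s _ hs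
          by_cases h2 : (c : ℕ) = (s : ℕ)
          · exact absurd (Fin.ext (h2.symm.trans hrc.symm)) hs
          · rw [pinvDiag]; simp only [Matrix.of_apply, if_neg h2, zero_mul]
        · intro h; exact absurd (Finset.mem_univ r) h
      rw [h1, mul_one]
  · intro a _ ha
    rw [PD_offdiag D hd a c ha, mul_zero]
  · intro h; exact absurd (Finset.mem_univ c) h

lemma penrose2 : pinvDiag D * (D * pinvDiag D) = pinvDiag D := by
  ext a b
  rw [Matrix.mul_apply, Finset.sum_eq_single b]
  · by_cases hP : pinvDiag D a b = 0
    · rw [hP, zero_mul]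
    · have hab : (a : ℕ) = (b : ℕ) := by
        by_contra h
        exact hP (by rw [pinvDiag]; simp only [Matrix.of_apply, if_neg h])
      have hinv : pinvDiag D a b = (D b a)⁻¹ := by
        rw [pinvDiag]; simp only [Matrix.of_apply, if_pos hab]
      have hDba : D b a ≠ 0 := by
        intro h0
        exact hP (by rw [hinv, h0]; exact _root_.inv_zero)
      have h1 : (D * pinvDiag D) b b = 1 := by
        rw [Matrix.mul_apply, Finset.sum_eq_single a]
        · rw [pinvDiag]
          simp only [Matrix.of_apply, if_pos hab]
          exact mul_inv_cancel₀ hDba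
        · intro t _ ht
          by_cases h2 : (t : ℕ) = (b : ℕ)
          · exact absurd (Fin.ext (h2.trans hab.symm)) ht
          · rw [pinvDiag]; simp only [Matrix.of_apply, if_neg h2, mul_zero]
        · intro h; exact absurd (Finset.mem_univ a) h
      rw [h1, mul_one]
  · intro s _ hs
    rw [DP_offdiag D hd s b hs, mul_zero]
  · intro h; exact absurd (Finset.mem_univ b) h

lemma penrose3 : (D * pinvDiag D)ᵀ = D * pinvDiag D := by
  ext i j
  rw [Matrix.transpose_apply]
  by_cases h : i = j
  · rw [h]
  · rw [DP_offdiag D hd j i (fun hji => h (hji.symm)), DP_offdiag D hd i j h]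

lemma penrose4 : (pinvDiag D * D)ᵀ = pinvDiag D * D := by
  ext i j
  rw [Matrix.transpose_apply]
  by_cases h : i = j
  · rw [h]
  · rw [PD_offdiag D hd j i (fun hji => h (hji.symm)), PD_offdiag D hd i j h]

end pinvlemmas

section entrylemma
variable {a b p : ℕ} [NeZero p]

lemma Fmat_conj_entry (k t : ZMod p) :
    (starRingEnd ℂ) (Fmat p k t) = (1 / (Real.sqrt p : ℂ)) * zeta p (-(k * t)) := by
  rw [Fmat]
  simp only [Matrix.of_apply, _root_.map_mul, map_div₀, _root_.map_one, Complex.conj_ofReal]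
  rw [← zeta_mul_val, conj_zeta]

lemma entry0 (Q : ZMod p → Matrix (Fin a) (Fin b) ℂ) (t : ZMod p) (r : Fin a) (c : Fin b) :
    (((Fmat p)ᴴ ⊗ₖ (1 : Matrix (Fin a) (Fin a) ℂ)) * blockDiag Q *
      ((Fmat p) ⊗ₖ (1 : Matrix (Fin b) (Fin b) ℂ))) (t, r) (0, c)
      = (p : ℂ)⁻¹ * ∑ k : ZMod p, zeta p (-(k * t)) * Q k r c := by
  simp only [Matrix.mul_apply, Fintype.sum_prod_type, Matrix.kroneckerMap_apply,
    Matrix.conjTranspose_apply, _root_.blockDiag, Matrix.of_apply, Matrix.one_apply,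
    mul_ite, ite_mul, mul_zero, zero_mul, mul_one, one_mul,
    Finset.sum_ite_eq, Finset.sum_ite_eq', Finset.mem_univ, if_true]
  simp only [Finset.sum_ite_irrel, Finset.sum_ite_eq, Finset.sum_ite_eq', Finset.mem_univ,
    if_true, Finset.sum_const_zero]
  rw [Finset.mul_sum]
  apply Finset.sum_congr rfl
  intro k _
  have h0 : Fmat p k 0 = 1 / (Real.sqrt p : ℂ) := by
    rw [Fmat]
    simp [ZMod.val_zero]
  have hconj : (star (Fmat p k t) : ℂ) = (1 / (Real.sqrt p : ℂ)) * zeta p (-(k * t)) :=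
    Fmat_conj_entry k t
  have hs : (1 / (Real.sqrt p : ℂ)) * (1 / (Real.sqrt p : ℂ)) = (p : ℂ)⁻¹ := by
    rw [div_mul_div_comm, one_mul, ← Complex.ofReal_mul, Real.mul_self_sqrt (Nat.cast_nonneg p)]
    simp
  rw [hconj, h0]
  linear_combination (zeta p (-(k * t)) * Q k r c) * hs

end entrylemma

theorem stmt19 {m n p : ℕ} [NeZero p] (S : Tensor ℝ m n p)
    (hdiag : ∀ (k : ZMod p) (r : Fin m) (c : Fin n),
      (r : ℕ) ≠ (c : ℕ) → fblock (cplx S) k r c = 0)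
    (hreal : ∀ (k : ZMod p) (r : Fin m) (c : Fin n), (fblock (cplx S) k r c).im = 0)
    (hnn : ∀ (k : ZMod p) (r : Fin m) (c : Fin n), 0 ≤ (fblock (cplx S) k r c).re)
    (hsym : ∀ k : ZMod p, fblock (cplx S) (-k) = fblock (cplx S) k) :
    ∀ X : Tensor ℂ n m p,
      bcirc X =
        ((Fmat p)ᴴ ⊗ₖ (1 : Matrix (Fin n) (Fin n) ℂ)) *
          blockDiag (fun k => pinvDiag (fblock (cplx S) k)) *
          ((Fmat p) ⊗ₖ (1 : Matrix (Fin m) (Fin m) ℂ)) →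
      (∀ i, IsRealM (X i)) ∧
      tpr (cplx S) (tpr X (cplx S)) = cplx S ∧
      tpr X (tpr (cplx S) X) = X ∧
      tT (tpr (cplx S) X) = tpr (cplx S) X ∧
      tT (tpr X (cplx S)) = tpr X (cplx S) := by
  intro X hX
  have hXslice : X = fun t => (p : ℂ)⁻¹ • ∑ k : ZMod p,
      zeta p (-(k * t)) • pinvDiag (fblock (cplx S) k) := by
    funext t
    ext r c
    have h := congrFun (congrFun hX (t, r)) (0, c)
    rw [entry0] at h
    have hb : bcirc X (t, r) (0, c) = X t r c := by
      rw [bcirc]; simp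
    rw [← hb, h]
    simp only [Matrix.smul_apply, Matrix.sum_apply, smul_eq_mul, Finset.mul_sum]
  have hfX : ∀ i, fblock X i = pinvDiag (fblock (cplx S) i) := by
    intro i
    rw [hXslice]
    exact fblock_of_inv _ i
  have hPsym : ∀ k : ZMod p, pinvDiag (fblock (cplx S) (-k)) = pinvDiag (fblock (cplx S) k) :=
    fun k => by rw [hsym]
  refine ⟨?_, ?_, ?_, ?_, ?_⟩
  · -- realness
    intro t r c
    have hent : X t r c = (p : ℂ)⁻¹ * ∑ k : ZMod p,
        zeta p (-(k * t)) * pinvDiag (fblock (cplx S) k) r c := by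
      rw [hXslice]
      simp only [Matrix.smul_apply, Matrix.sum_apply, smul_eq_mul]
    have hPreal : ∀ k : ZMod p, (starRingEnd ℂ) (pinvDiag (fblock (cplx S) k) r c)
        = pinvDiag (fblock (cplx S) k) r c := by
      intro k
      rw [pinvDiag]
      simp only [Matrix.of_apply]
      split_ifs with h
      · rw [map_inv₀, Complex.conj_eq_iff_im.mpr (hreal k c r)]
      · exact map_zero _
    have hconj : (starRingEnd ℂ) (X t r c) = X t r c := by
      rw [hent, _root_.map_mul, map_inv₀, map_natCast, map_sum]
      congr 1
      have step1 : ∀ k : ZMod p,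
          (starRingEnd ℂ) (zeta p (-(k * t)) * pinvDiag (fblock (cplx S) k) r c)
            = zeta p (k * t) * pinvDiag (fblock (cplx S) k) r c := by
        intro k
        rw [_root_.map_mul, conj_zeta, neg_neg, hPreal]
      simp only [step1]
      rw [← Equiv.sum_comp (Equiv.neg (ZMod p))
        (fun k => zeta p (-(k * t)) * pinvDiag (fblock (cplx S) k) r c)]
      apply Finset.sum_congr rfl
      intro k _
      simp only [Equiv.neg_apply, neg_mul, neg_neg]
      rw [hPsym]
    exact Complex.conj_eq_iff_im.mp hconj
  · apply fblock_inj
    intro i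
    rw [fblock_tpr, fblock_tpr, hfX]
    exact penrose1 _ (hdiag i)
  · apply fblock_inj
    intro i
    rw [fblock_tpr, fblock_tpr, hfX]
    exact penrose2 _ (hdiag i)
  · apply fblock_inj
    intro i
    rw [fblock_tT, fblock_tpr, fblock_tpr, hfX, hfX, hsym]
    exact penrose3 _ (hdiag i)
  · apply fblock_inj
    intro i
    rw [fblock_tT, fblock_tpr, fblock_tpr, hfX, hfX, hsym]
    exact penrose4 _ (hdiag i)
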